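/- If the lead time forecast is based on a single past observation (m = 1) and σ_D² > 0, then the bullwhip effect measure equals Var(q_t)/Var(D_t) = 2σ_L²μ_D²/σ_D² + 2μ_L²/n² + 2(μ_L + σ_L²)/n + 1 for every t ∈ ℤ. -/

import Mathlib

open MeasureTheory ProbabilityTheory Filter
open scoped ENNReal

lemma mulL2' {Ω : Type*} [MeasurableSpace Ω] {P : Measure Ω} {f g : Ω → ℝ}
    (hf : MemLp f 2 P) (hg : MemLp g 2 P) : Integrable (fun ω => f ω * g ω) P := by
  have h : (1 : ℝ≥0∞) / 1 = 1 / 2 + 1 / 2 := by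
    rw [ENNReal.add_halves]; norm_num
  have := hg.smul (φ := f) (r := 1) hf
  rw [memLp_one_iff_integrable] at this
  exact this

set_option maxHeartbeats 1000000 in
/-- If the lead time forecast is based on a single past observation
(`m = 1`, i.e. `L̂_t = L_{t−1}`) and `σ_D² > 0`, then the bullwhip effect measure equals
`Var(q_t)/Var(D_t) = 2σ_L²μ_D²/σ_D² + 2μ_L²/n² + 2(μ_L + σ_L²)/n + 1` for every `t : ℤ`. -/
theorem bullwhip_measure_m_eq_one
    {Ω : Type*} [MeasurableSpace Ω] (P : Measure Ω) [IsProbabilityMeasure P]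
    (D : ℤ → Ω → ℝ) (L : ℤ → Ω → ℕ)
    (μD μL σD2 σL2 : ℝ)
    (hDmeas : ∀ t, Measurable (D t))
    (hLmeas : ∀ t, Measurable (L t))
    (hD2 : ∀ t, MemLp (D t) 2 P)
    (hL2 : ∀ t, MemLp (fun ω => (L t ω : ℝ)) 2 P)
    (hDid : ∀ s t, IdentDistrib (D s) (D t) P P)
    (hLid : ∀ s t, IdentDistrib (L s) (L t) P P)
    (hIndep : iIndepFun (β := fun i : ℤ ⊕ ℤ => match i with
        | Sum.inl _ => ℝ
        | Sum.inr _ => ℕ)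
      (m := fun i => match i with
        | Sum.inl _ => (inferInstance : MeasurableSpace ℝ)
        | Sum.inr _ => (inferInstance : MeasurableSpace ℕ))
      (fun i => match i with
        | Sum.inl t => D t
        | Sum.inr t => L t) P)
    (hμD : ∀ t, ∫ ω, D t ω ∂P = μD)
    (hσD : ∀ t, variance (D t) P = σD2)
    (hμL : ∀ t, ∫ ω, (L t ω : ℝ) ∂P = μL)
    (hσL : ∀ t, variance (fun ω => (L t ω : ℝ)) P = σL2)
    (n : ℕ) (hn : 1 ≤ n)
    (hσD2pos : 0 < σD2) :
    ∀ t : ℤ, variance (fun ω => ((L (t - 1) ω : ℝ) * ((n : ℝ)⁻¹ * ∑ i ∈ Finset.Icc 1 n, D (t - i) ω) - (L (t - 1 - 1) ω : ℝ) * ((n : ℝ)⁻¹ * ∑ i ∈ Finset.Icc 1 n, D ((t - 1) - i) ω) + D (t - 1) ω)) P / variance (D t) P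
      = 2 * σL2 * μD ^ 2 / σD2 + 2 * μL ^ 2 / (n : ℝ) ^ 2
        + 2 * (μL + σL2) / (n : ℝ) + 1 := by
  classical
  intro t
  have hnR : (0:ℝ) < n := by exact_mod_cast hn
  have hnR' : (n:ℝ) ≠ 0 := ne_of_gt hnR
  -- basic random variables
  set X : Ω → ℝ := D (t - 1) with hXdef
  set Y : Ω → ℝ := D (t - 1 - (n : ℤ)) with hYdef
  set Tn : Ω → ℝ := fun ω => ∑ i ∈ Finset.Icc 2 n, D (t - (i : ℤ)) ω with hTdef
  set a : Ω → ℝ := fun ω => (L (t - 1) ω : ℝ) with hadef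
  set b : Ω → ℝ := fun ω => (L (t - 1 - 1) ω : ℝ) with hbdef
  set A : Ω → ℝ := fun ω => a ω - b ω with hAdef
  set B : Ω → ℝ := fun ω => a ω + n with hBdef
  set C : Ω → ℝ := fun ω => -(b ω) with hCdef
  set Z : Ω → ℝ := fun ω => A ω * Tn ω + B ω * X ω + C ω * Y ω with hZdef
  -- ambient measurability
  have hXm : Measurable X := hDmeas _
  have hYm : Measurable Y := hDmeas _
  have hTm : Measurable Tn := Finset.measurable_sum _ fun i _ => hDmeas _
  have ham : Measurable a := (measurable_of_countable (fun k : ℕ => (k:ℝ))).comp (hLmeas _)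
  have hbm : Measurable b := (measurable_of_countable (fun k : ℕ => (k:ℝ))).comp (hLmeas _)
  have hAm : Measurable A := ham.sub hbm
  have hBm : Measurable B := ham.add measurable_const
  have hCm : Measurable C := hbm.neg
  -- MemLp 2
  have hX2 : MemLp X 2 P := hD2 _
  have hY2 : MemLp Y 2 P := hD2 _
  have hTsum : Tn = ∑ i ∈ Finset.Icc 2 n, D (t - (i : ℤ)) := by
    funext ω; rw [hTdef, Finset.sum_apply]
  have hT2 : MemLp Tn 2 P := by
    rw [hTsum]; exact memLp_finset_sum' _ fun i _ => hD2 _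
  have ha2 : MemLp a 2 P := hL2 _
  have hb2 : MemLp b 2 P := hL2 _
  have hA2 : MemLp A 2 P := ha2.sub hb2
  have hB2 : MemLp B 2 P := ha2.add (memLp_const _)
  have hC2 : MemLp C 2 P := hb2.neg
  -- pairwise independence of demands
  have hDind : ∀ s u : ℤ, s ≠ u → IndepFun (D s) (D u) P := by
    intro s u h
    exact hIndep.indepFun (by simpa using h : (Sum.inl s : ℤ ⊕ ℤ) ≠ Sum.inl u)
  have hab : IndepFun a b P := by
    have h := hIndep.indepFun
      (show (Sum.inr (t-1) : ℤ ⊕ ℤ) ≠ Sum.inr (t-1-1) by simp; omega)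
    exact h.comp (measurable_of_countable (fun k : ℕ => (k:ℝ)))
      (measurable_of_countable (fun k : ℕ => (k:ℝ)))
  -- block independence between lead-time side and demand side
  obtain ⟨I1, I2, I3, I4, I5, I6, I7, I8, I9⟩ :
      IndepFun A Tn P ∧ IndepFun B X P ∧ IndepFun C Y P
      ∧ IndepFun (fun ω => A ω * A ω) (fun ω => Tn ω * Tn ω) P
      ∧ IndepFun (fun ω => B ω * B ω) (fun ω => X ω * X ω) P
      ∧ IndepFun (fun ω => C ω * C ω) (fun ω => Y ω * Y ω) P
      ∧ IndepFun (fun ω => A ω * B ω) (fun ω => Tn ω * X ω) P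
      ∧ IndepFun (fun ω => A ω * C ω) (fun ω => Tn ω * Y ω) P
      ∧ IndepFun (fun ω => B ω * C ω) (fun ω => X ω * Y ω) P := by
    set σ : (ℤ ⊕ ℤ) → MeasurableSpace Ω := fun i =>
      MeasurableSpace.comap (match i with
          | Sum.inl s => D s
          | Sum.inr s => L s : Ω → (match i with | Sum.inl _ => ℝ | Sum.inr _ => ℕ))
        (match i with
          | Sum.inl _ => (inferInstance : MeasurableSpace ℝ)
          | Sum.inr _ => (inferInstance : MeasurableSpace ℕ)) with hσ
    have hle : ∀ i, σ i ≤ ‹MeasurableSpace Ω› := by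
      rintro (s | s)
      · exact (hDmeas s).comap_le
      · exact (hLmeas s).comap_le
    have hdisj : Disjoint (Set.range (Sum.inr : ℤ → ℤ ⊕ ℤ)) (Set.range (Sum.inl : ℤ → ℤ ⊕ ℤ)) := by
      rw [Set.disjoint_left]
      rintro x ⟨s, rfl⟩ ⟨u, h⟩
      exact absurd h (by simp)
    have hLD : Indep (⨆ i ∈ Set.range (Sum.inr : ℤ → ℤ ⊕ ℤ), σ i)
        (⨆ i ∈ Set.range (Sum.inl : ℤ → ℤ ⊕ ℤ), σ i) P :=
      indep_iSup_of_disjoint hle hIndep.iIndep hdisj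
    set mL : MeasurableSpace Ω := ⨆ i ∈ Set.range (Sum.inr : ℤ → ℤ ⊕ ℤ), σ i with hmLdef
    set mD : MeasurableSpace Ω := ⨆ i ∈ Set.range (Sum.inl : ℤ → ℤ ⊕ ℤ), σ i with hmDdef
    have hDmD : ∀ s : ℤ, Measurable[mD] (D s) := fun s =>
      Measurable.of_comap_le (le_trans (le_of_eq rfl) (le_biSup σ (i := Sum.inl s) ⟨s, rfl⟩))
    have hLmL : ∀ s : ℤ, Measurable[mL] (fun ω => (L s ω : ℝ)) := by
      intro s
      have h1 : Measurable[mL] (L s) :=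
        Measurable.of_comap_le (le_trans (le_of_eq rfl) (le_biSup σ (i := Sum.inr s) ⟨s, rfl⟩))
      exact (measurable_of_countable (fun k : ℕ => (k : ℝ))).comp h1
    have mk : ∀ {W V : Ω → ℝ}, Measurable[mL] W → Measurable[mD] V → IndepFun W V P := by
      intro W V hW hV
      exact indep_of_indep_of_le_right (indep_of_indep_of_le_left hLD hW.comap_le) hV.comap_le
    have hamL : Measurable[mL] a := hLmL _
    have hbmL : Measurable[mL] b := hLmL _
    have hAmL : Measurable[mL] A := hamL.sub hbmL
    have hBmL : Measurable[mL] B := hamL.add measurable_const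
    have hCmL : Measurable[mL] C := hbmL.neg
    have hXmD : Measurable[mD] X := hDmD _
    have hYmD : Measurable[mD] Y := hDmD _
    have hTmD : Measurable[mD] Tn := Finset.measurable_sum _ fun i _ => hDmD _
    exact ⟨mk hAmL hTmD, mk hBmL hXmD, mk hCmL hYmD,
      mk (hAmL.mul hAmL) (hTmD.mul hTmD), mk (hBmL.mul hBmL) (hXmD.mul hXmD),
      mk (hCmL.mul hCmL) (hYmD.mul hYmD), mk (hAmL.mul hBmL) (hTmD.mul hXmD),
      mk (hAmL.mul hCmL) (hTmD.mul hYmD), mk (hBmL.mul hCmL) (hXmD.mul hYmD)⟩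
  -- first moments
  have ia : Integrable a P := ha2.integrable one_le_two
  have ib : Integrable b P := hb2.integrable one_le_two
  have eA : ∫ ω, A ω ∂P = 0 := by
    have h1 : (fun ω => A ω) = fun ω => a ω - b ω := by rw [hAdef]
    rw [h1, integral_sub ia ib, hadef, hbdef, hμL, hμL, sub_self]
  have eB : ∫ ω, B ω ∂P = μL + n := by
    have h1 : (fun ω => B ω) = fun ω => a ω + (n:ℝ) := by rw [hBdef]
    rw [h1, integral_add ia (integrable_const _), hadef, hμL, integral_const]
    simp
  have eC : ∫ ω, C ω ∂P = -μL := by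
    have h1 : (fun ω => C ω) = fun ω => -(b ω) := by rw [hCdef]
    rw [h1, integral_neg, hbdef, hμL]
  have eX : ∫ ω, X ω ∂P = μD := hμD _
  have eY : ∫ ω, Y ω ∂P = μD := hμD _
  have hcard : ((Finset.Icc 2 n).card : ℝ) = (n : ℝ) - 1 := by
    rw [Nat.card_Icc]
    have h2 : n + 1 - 2 = n - 1 := by omega
    rw [h2, Nat.cast_sub hn]; simp
  have eT : ∫ ω, Tn ω ∂P = ((n:ℝ) - 1) * μD := by
    rw [hTdef]
    rw [integral_finset_sum _ fun i _ => (hD2 _).integrable one_le_two]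
    simp only [hμD]
    rw [Finset.sum_const, nsmul_eq_mul, hcard]
  -- second moments, lead-time side
  have eaa : ∫ ω, a ω * a ω ∂P = σL2 + μL * μL := by
    have h := variance_eq_sub (μ := P) (hL2 (t-1))
    rw [hσL, hμL] at h
    simp only [Pi.pow_apply] at h
    have h2 : ∫ ω, a ω * a ω ∂P = ∫ ω, ((L (t-1) ω : ℝ)) ^ 2 ∂P := by
      rw [hadef]; congr 1; funext ω; rw [pow_two]
    rw [h2]; nlinarith [h]
  have ebb : ∫ ω, b ω * b ω ∂P = σL2 + μL * μL := by
    have h := variance_eq_sub (μ := P) (hL2 (t-1-1))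
    rw [hσL, hμL] at h
    simp only [Pi.pow_apply] at h
    have h2 : ∫ ω, b ω * b ω ∂P = ∫ ω, ((L (t-1-1) ω : ℝ)) ^ 2 ∂P := by
      rw [hbdef]; congr 1; funext ω; rw [pow_two]
    rw [h2]; nlinarith [h]
  have eab : ∫ ω, a ω * b ω ∂P = μL * μL := by
    have h := hab.integral_fun_mul_eq_mul_integral ha2.aestronglyMeasurable hb2.aestronglyMeasurable
    rw [h, hadef, hbdef, hμL, hμL]
  have iaa : Integrable (fun ω => a ω * a ω) P := mulL2' ha2 ha2
  have ibb : Integrable (fun ω => b ω * b ω) P := mulL2' hb2 hb2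
  have iab : Integrable (fun ω => a ω * b ω) P := mulL2' ha2 hb2
  have eAA : ∫ ω, A ω * A ω ∂P = 2 * σL2 := by
    have h : (fun ω => A ω * A ω)
        = fun ω => (a ω * a ω - 2 * (a ω * b ω)) + b ω * b ω := by
      funext ω; rw [hAdef]; ring
    have j1 : Integrable (fun ω => 2 * (a ω * b ω)) P := iab.const_mul 2
    have j2 : Integrable (fun ω => a ω * a ω - 2 * (a ω * b ω)) P := iaa.sub j1
    rw [h, integral_add j2 ibb, integral_sub iaa j1, integral_const_mul, eaa, eab, ebb]
    ring
  have eBB : ∫ ω, B ω * B ω ∂P = σL2 + μL * μL + 2 * (n:ℝ) * μL + (n:ℝ) * (n:ℝ) := by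
    have h : (fun ω => B ω * B ω)
        = fun ω => (a ω * a ω + 2 * (n:ℝ) * a ω) + (n:ℝ) * (n:ℝ) := by
      funext ω; rw [hBdef]; ring
    have j1 : Integrable (fun ω => 2 * (n:ℝ) * a ω) P := ia.const_mul _
    have j2 : Integrable (fun ω => a ω * a ω + 2 * (n:ℝ) * a ω) P := iaa.add j1
    rw [h, integral_add j2 (integrable_const _), integral_add iaa j1, integral_const_mul,
      integral_const, eaa, hadef, hμL]
    simp
  have eCC : ∫ ω, C ω * C ω ∂P = σL2 + μL * μL := by
    have h : (fun ω => C ω * C ω) = fun ω => b ω * b ω := by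
      funext ω; rw [hCdef]; ring
    rw [h, ebb]
  have eAB : ∫ ω, A ω * B ω ∂P = σL2 := by
    have h : (fun ω => A ω * B ω)
        = fun ω => (a ω * a ω + (n:ℝ) * a ω) - (a ω * b ω + (n:ℝ) * b ω) := by
      funext ω; rw [hAdef, hBdef]; ring
    have j1 : Integrable (fun ω => (n:ℝ) * a ω) P := ia.const_mul _
    have j2 : Integrable (fun ω => (n:ℝ) * b ω) P := ib.const_mul _
    have j3 : Integrable (fun ω => a ω * a ω + (n:ℝ) * a ω) P := iaa.add j1
    have j4 : Integrable (fun ω => a ω * b ω + (n:ℝ) * b ω) P := iab.add j2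
    rw [h, integral_sub j3 j4, integral_add iaa j1, integral_add iab j2,
      integral_const_mul, integral_const_mul, eaa, eab, hadef, hbdef]
    simp only [hμL]
    ring
  have eAC : ∫ ω, A ω * C ω ∂P = σL2 := by
    have h : (fun ω => A ω * C ω) = fun ω => b ω * b ω - a ω * b ω := by
      funext ω; rw [hAdef, hCdef]; ring
    rw [h, integral_sub ibb iab, ebb, eab]; ring
  have eBC : ∫ ω, B ω * C ω ∂P = -(μL * μL) - (n:ℝ) * μL := by
    have h : (fun ω => B ω * C ω) = fun ω => -(a ω * b ω) - (n:ℝ) * b ω := by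
      funext ω; rw [hBdef, hCdef]; ring
    have j1 : Integrable (fun ω => -(a ω * b ω)) P := iab.neg
    have j2 : Integrable (fun ω => (n:ℝ) * b ω) P := ib.const_mul _
    rw [h, integral_sub j1 j2, integral_neg, integral_const_mul, eab, hbdef, hμL]
  -- second moments, demand side
  have eXX : ∫ ω, X ω * X ω ∂P = σD2 + μD * μD := by
    have h := variance_eq_sub (μ := P) (hD2 (t-1))
    rw [hσD, hμD] at h
    simp only [Pi.pow_apply] at h
    have h2 : ∫ ω, X ω * X ω ∂P = ∫ ω, (D (t-1) ω) ^ 2 ∂P := by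
      rw [hXdef]; congr 1; funext ω; rw [pow_two]
    rw [h2]; nlinarith [h]
  have eYY : ∫ ω, Y ω * Y ω ∂P = σD2 + μD * μD := by
    have h := variance_eq_sub (μ := P) (hD2 (t-1-(n:ℤ)))
    rw [hσD, hμD] at h
    simp only [Pi.pow_apply] at h
    have h2 : ∫ ω, Y ω * Y ω ∂P = ∫ ω, (D (t-1-(n:ℤ)) ω) ^ 2 ∂P := by
      rw [hYdef]; congr 1; funext ω; rw [pow_two]
    rw [h2]; nlinarith [h]
  have eXY : ∫ ω, X ω * Y ω ∂P = μD * μD := by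
    have hne : (t - 1 : ℤ) ≠ t - 1 - (n:ℤ) := by
      have h1 : (1:ℤ) ≤ (n:ℤ) := by exact_mod_cast hn
      omega
    have h := (hDind _ _ hne).integral_fun_mul_eq_mul_integral (hD2 _).aestronglyMeasurable
      (hD2 _).aestronglyMeasurable
    rw [hXdef, hYdef, h, hμD, hμD]
  have hVarT : variance Tn P = ((n:ℝ) - 1) * σD2 := by
    rw [hTsum]
    rw [IndepFun.variance_sum (fun i _ => hD2 _) ?_]
    · simp only [hσD]
      rw [Finset.sum_const, nsmul_eq_mul, hcard]
    · intro i hi j hj hij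
      refine hDind _ _ ?_
      intro h
      refine hij ?_
      have : (i:ℤ) = (j:ℤ) := by omega
      exact_mod_cast this
  have eTT : ∫ ω, Tn ω * Tn ω ∂P = ((n:ℝ) - 1) * σD2 + (((n:ℝ) - 1) * μD) ^ 2 := by
    have h := variance_eq_sub (μ := P) hT2
    rw [hVarT] at h
    simp only [Pi.pow_apply] at h
    have h2 : ∫ ω, Tn ω * Tn ω ∂P = ∫ ω, (Tn ω) ^ 2 ∂P := by
      congr 1; funext ω; rw [pow_two]
    rw [eT] at h
    rw [h2]; linarith [h]
  have eTX : ∫ ω, Tn ω * X ω ∂P = ((n:ℝ) - 1) * (μD * μD) := by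
    have h : (fun ω => Tn ω * X ω)
        = fun ω => ∑ i ∈ Finset.Icc 2 n, D (t - (i:ℤ)) ω * X ω := by
      funext ω; rw [hTdef]; rw [Finset.sum_mul]
    rw [h, integral_finset_sum _ fun i hi => mulL2' (hD2 _) hX2]
    have hval : ∀ i ∈ Finset.Icc 2 n, ∫ ω, D (t - (i:ℤ)) ω * X ω ∂P = μD * μD := by
      intro i hi
      have hi2 : 2 ≤ i := (Finset.mem_Icc.1 hi).1
      have hne : (t - (i:ℤ)) ≠ t - 1 := by
        have : (2:ℤ) ≤ (i:ℤ) := by exact_mod_cast hi2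
        omega
      have hh := (hDind _ _ hne).integral_fun_mul_eq_mul_integral (hD2 _).aestronglyMeasurable
        (hD2 _).aestronglyMeasurable
      rw [hXdef, hh, hμD, hμD]
    rw [Finset.sum_congr rfl hval, Finset.sum_const, nsmul_eq_mul, hcard]
  have eTY : ∫ ω, Tn ω * Y ω ∂P = ((n:ℝ) - 1) * (μD * μD) := by
    have h : (fun ω => Tn ω * Y ω)
        = fun ω => ∑ i ∈ Finset.Icc 2 n, D (t - (i:ℤ)) ω * Y ω := by
      funext ω; rw [hTdef]; rw [Finset.sum_mul]
    rw [h, integral_finset_sum _ fun i hi => mulL2' (hD2 _) hY2]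
    have hval : ∀ i ∈ Finset.Icc 2 n, ∫ ω, D (t - (i:ℤ)) ω * Y ω ∂P = μD * μD := by
      intro i hi
      have hin : i ≤ n := (Finset.mem_Icc.1 hi).2
      have hne : (t - (i:ℤ)) ≠ t - 1 - (n:ℤ) := by
        have h1 : (i:ℤ) ≤ (n:ℤ) := by exact_mod_cast hin
        omega
      have hh := (hDind _ _ hne).integral_fun_mul_eq_mul_integral (hD2 _).aestronglyMeasurable
        (hD2 _).aestronglyMeasurable
      rw [hYdef, hh, hμD, hμD]
    rw [Finset.sum_congr rfl hval, Finset.sum_const, nsmul_eq_mul, hcard]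
  -- integrability of products
  have iTT : Integrable (fun ω => Tn ω * Tn ω) P := mulL2' hT2 hT2
  have iXX : Integrable (fun ω => X ω * X ω) P := mulL2' hX2 hX2
  have iYY : Integrable (fun ω => Y ω * Y ω) P := mulL2' hY2 hY2
  have iTX : Integrable (fun ω => Tn ω * X ω) P := mulL2' hT2 hX2
  have iTY : Integrable (fun ω => Tn ω * Y ω) P := mulL2' hT2 hY2
  have iXY : Integrable (fun ω => X ω * Y ω) P := mulL2' hX2 hY2
  have iAA : Integrable (fun ω => A ω * A ω) P := mulL2' hA2 hA2
  have iBB : Integrable (fun ω => B ω * B ω) P := mulL2' hB2 hB2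
  have iCC : Integrable (fun ω => C ω * C ω) P := mulL2' hC2 hC2
  have iAB : Integrable (fun ω => A ω * B ω) P := mulL2' hA2 hB2
  have iAC : Integrable (fun ω => A ω * C ω) P := mulL2' hA2 hC2
  have iBC : Integrable (fun ω => B ω * C ω) P := mulL2' hB2 hC2
  -- MemLp 2 of products with independent factors
  have hZsummand : ∀ (F G : Ω → ℝ), Measurable F → Measurable G →
      IndepFun (fun ω => F ω * F ω) (fun ω => G ω * G ω) P →
      Integrable (fun ω => F ω * F ω) P →
      Integrable (fun ω => G ω * G ω) P → MemLp (fun ω => F ω * G ω) 2 P := by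
    intro F G hFm hGm hind iFF iGG
    have hsq : Integrable (fun ω => (F ω * G ω) ^ 2) P := by
      have h : (fun ω => (F ω * G ω) ^ 2) = fun ω => (F ω * F ω) * (G ω * G ω) := by
        funext ω; ring
      rw [h]
      exact hind.integrable_mul iFF iGG
    exact (memLp_two_iff_integrable_sq (hFm.mul hGm).aestronglyMeasurable).2 hsq
  have hAT2 : MemLp (fun ω => A ω * Tn ω) 2 P := hZsummand A Tn hAm hTm I4 iAA iTT
  have hBX2 : MemLp (fun ω => B ω * X ω) 2 P := hZsummand B X hBm hXm I5 iBB iXX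
  have hCY2 : MemLp (fun ω => C ω * Y ω) 2 P := hZsummand C Y hCm hYm I6 iCC iYY
  have hZ2 : MemLp Z 2 P := by
    rw [hZdef]
    exact (hAT2.add hBX2).add hCY2
  -- mean of Z
  have iAT : Integrable (fun ω => A ω * Tn ω) P := hAT2.integrable one_le_two
  have iBX : Integrable (fun ω => B ω * X ω) P := hBX2.integrable one_le_two
  have iCY : Integrable (fun ω => C ω * Y ω) P := hCY2.integrable one_le_two
  have iATBX : Integrable (fun ω => A ω * Tn ω + B ω * X ω) P := iAT.add iBX
  have eZ : ∫ ω, Z ω ∂P = (n:ℝ) * μD := by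
    have h1 : (fun ω => Z ω) = fun ω => (A ω * Tn ω + B ω * X ω) + C ω * Y ω := by
      rw [hZdef]
    rw [h1, integral_add iATBX iCY, integral_add iAT iBX]
    rw [I1.integral_fun_mul_eq_mul_integral hAm.aestronglyMeasurable hTm.aestronglyMeasurable,
      I2.integral_fun_mul_eq_mul_integral hBm.aestronglyMeasurable hXm.aestronglyMeasurable,
      I3.integral_fun_mul_eq_mul_integral hCm.aestronglyMeasurable hYm.aestronglyMeasurable,
      eA, eB, eC, eT, eX, eY]
    ring
  -- second moment of Z
  have iAATT : Integrable (fun ω => (A ω * A ω) * (Tn ω * Tn ω)) P :=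
    I4.integrable_mul iAA iTT
  have iBBXX : Integrable (fun ω => (B ω * B ω) * (X ω * X ω)) P :=
    I5.integrable_mul iBB iXX
  have iCCYY : Integrable (fun ω => (C ω * C ω) * (Y ω * Y ω)) P :=
    I6.integrable_mul iCC iYY
  have iABTX : Integrable (fun ω => (A ω * B ω) * (Tn ω * X ω)) P :=
    I7.integrable_mul iAB iTX
  have iACTY : Integrable (fun ω => (A ω * C ω) * (Tn ω * Y ω)) P :=
    I8.integrable_mul iAC iTY
  have iBCXY : Integrable (fun ω => (B ω * C ω) * (X ω * Y ω)) P :=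
    I9.integrable_mul iBC iXY
  have j1 : Integrable (fun ω => 2 * ((A ω * B ω) * (Tn ω * X ω))) P := iABTX.const_mul 2
  have j2 : Integrable (fun ω => 2 * ((A ω * C ω) * (Tn ω * Y ω))) P := iACTY.const_mul 2
  have j3 : Integrable (fun ω => 2 * ((B ω * C ω) * (X ω * Y ω))) P := iBCXY.const_mul 2
  have j4 : Integrable (fun ω => (A ω * A ω) * (Tn ω * Tn ω)
      + (B ω * B ω) * (X ω * X ω)) P := iAATT.add iBBXX
  have j5 : Integrable (fun ω => (A ω * A ω) * (Tn ω * Tn ω)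
      + (B ω * B ω) * (X ω * X ω) + (C ω * C ω) * (Y ω * Y ω)) P := j4.add iCCYY
  have j6 : Integrable (fun ω => 2 * ((A ω * B ω) * (Tn ω * X ω))
      + 2 * ((A ω * C ω) * (Tn ω * Y ω))) P := j1.add j2
  have j7 : Integrable (fun ω => (A ω * A ω) * (Tn ω * Tn ω)
      + (B ω * B ω) * (X ω * X ω) + (C ω * C ω) * (Y ω * Y ω)
      + (2 * ((A ω * B ω) * (Tn ω * X ω)) + 2 * ((A ω * C ω) * (Tn ω * Y ω)))) P := j5.add j6
  have eZZ : ∫ ω, (Z ω) ^ 2 ∂P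
      = (2 * σL2) * (((n:ℝ) - 1) * σD2 + (((n:ℝ) - 1) * μD) ^ 2)
        + (σL2 + μL * μL + 2 * (n:ℝ) * μL + (n:ℝ) * (n:ℝ)) * (σD2 + μD * μD)
        + (σL2 + μL * μL) * (σD2 + μD * μD)
        + 2 * (σL2 * (((n:ℝ) - 1) * (μD * μD)))
        + 2 * (σL2 * (((n:ℝ) - 1) * (μD * μD)))
        + 2 * ((-(μL * μL) - (n:ℝ) * μL) * (μD * μD)) := by
    have h : (fun ω => (Z ω) ^ 2)
        = fun ω => ((A ω * A ω) * (Tn ω * Tn ω)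
            + (B ω * B ω) * (X ω * X ω)
            + (C ω * C ω) * (Y ω * Y ω)
            + (2 * ((A ω * B ω) * (Tn ω * X ω))
            + 2 * ((A ω * C ω) * (Tn ω * Y ω))))
            + 2 * ((B ω * C ω) * (X ω * Y ω)) := by
      funext ω; rw [hZdef]; ring
    rw [h, integral_add j7 j3, integral_add j5 j6, integral_add j4 iCCYY,
      integral_add iAATT iBBXX, integral_add j1 j2,
      integral_const_mul, integral_const_mul, integral_const_mul]
    rw [I4.integral_fun_mul_eq_mul_integral (hAm.mul hAm).aestronglyMeasurable (hTm.mul hTm).aestronglyMeasurable,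
      I5.integral_fun_mul_eq_mul_integral (hBm.mul hBm).aestronglyMeasurable (hXm.mul hXm).aestronglyMeasurable,
      I6.integral_fun_mul_eq_mul_integral (hCm.mul hCm).aestronglyMeasurable (hYm.mul hYm).aestronglyMeasurable,
      I7.integral_fun_mul_eq_mul_integral (hAm.mul hBm).aestronglyMeasurable (hTm.mul hXm).aestronglyMeasurable,
      I8.integral_fun_mul_eq_mul_integral (hAm.mul hCm).aestronglyMeasurable (hTm.mul hYm).aestronglyMeasurable,
      I9.integral_fun_mul_eq_mul_integral (hBm.mul hCm).aestronglyMeasurable (hXm.mul hYm).aestronglyMeasurable,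
      eAA, eBB, eCC, eAB, eAC, eBC, eTT, eXX, eYY, eTX, eTY, eXY]
    ring
  -- variance of Z
  have hVarZ : variance Z P
      = (2 * σL2) * (((n:ℝ) - 1) * σD2 + (((n:ℝ) - 1) * μD) ^ 2)
        + (σL2 + μL * μL + 2 * (n:ℝ) * μL + (n:ℝ) * (n:ℝ)) * (σD2 + μD * μD)
        + (σL2 + μL * μL) * (σD2 + μD * μD)
        + 2 * (σL2 * (((n:ℝ) - 1) * (μD * μD)))
        + 2 * (σL2 * (((n:ℝ) - 1) * (μD * μD)))
        + 2 * ((-(μL * μL) - (n:ℝ) * μL) * (μD * μD))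
        - ((n:ℝ) * μD) ^ 2 := by
    rw [variance_eq_sub hZ2]
    simp only [Pi.pow_apply]
    rw [eZZ, eZ]
  -- rewrite the target function
  have hq : (fun ω => ((L (t - 1) ω : ℝ) * ((n : ℝ)⁻¹ * ∑ i ∈ Finset.Icc 1 n, D (t - i) ω)
        - (L (t - 1 - 1) ω : ℝ) * ((n : ℝ)⁻¹ * ∑ i ∈ Finset.Icc 1 n, D ((t - 1) - i) ω)
        + D (t - 1) ω))
      = fun ω => (n:ℝ)⁻¹ * Z ω := by
    funext ω
    have hins : Finset.Icc 1 n = insert 1 (Finset.Icc 2 n) := by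
      ext j; simp only [Finset.mem_Icc, Finset.mem_insert]; omega
    have h1 : ∑ i ∈ Finset.Icc 1 n, D (t - (i:ℤ)) ω = X ω + Tn ω := by
      rw [hins, Finset.sum_insert (by simp)]
      rw [hXdef, hTdef]
      norm_num
    have hins2 : Finset.Icc 2 (n+1) = insert (n+1) (Finset.Icc 2 n) := by
      ext j; simp only [Finset.mem_Icc, Finset.mem_insert]; omega
    have h2 : ∑ i ∈ Finset.Icc 1 n, D ((t - 1) - (i:ℤ)) ω = Tn ω + Y ω := by
      have hmap : ∑ i ∈ Finset.Icc 1 n, D ((t-1) - (i:ℤ)) ω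
          = ∑ j ∈ Finset.Icc 2 (n+1), D (t - (j:ℤ)) ω := by
        rw [show Finset.Icc 2 (n+1) = Finset.map (addRightEmbedding 1) (Finset.Icc 1 n) by
          rw [Finset.map_add_right_Icc]]
        rw [Finset.sum_map]
        refine Finset.sum_congr rfl fun i _ => ?_
        congr 1
        simp only [addRightEmbedding_apply]
        push_cast
        ring
      rw [hmap, hins2, Finset.sum_insert (by simp)]
      have hY' : D (t - ((n+1 : ℕ):ℤ)) ω = Y ω := by
        rw [hYdef]
        congr 1
        push_cast
        ring
      rw [hY', hTdef]
      ring
    rw [h1, h2]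
    rw [hZdef, hAdef, hBdef, hCdef, hadef, hbdef]
    field_simp
    ring
  rw [hq, variance_const_mul, hσD t, hVarZ]
  field_simp
  ring
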